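/- Let n be a positive integer, A : ℝ → (n×n real matrices) with A(r) symmetric for all r, and ℰ a real number. Let σ : ℝ → (n×n real matrices) be twice differentiable with σ(r) invertible for all r, σ''(r) = (A(r) − ℰ·I)σ(r), and σ(r)ᵀσ'(r) = σ'(r)ᵀσ(r) for all r (vanishing self-Wronskian). Set U(r) = σ'(r)σ(r)⁻¹. Then the function φ̃(r) := (σ(r)ᵀ)⁻¹ satisfies φ̃''(r) = (A(r) − 2U'(r) − ℰ·I)φ̃(r). -/

import Mathlib

open Matrix

private lemma hasDerivAt_mulEntry {n : ℕ} {M N : ℝ → Matrix (Fin n) (Fin n) ℝ}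
    {Md Nd : Matrix (Fin n) (Fin n) ℝ} {r : ℝ} {i j : Fin n}
    (hM : ∀ k, HasDerivAt (fun s => M s i k) (Md i k) r)
    (hN : ∀ k, HasDerivAt (fun s => N s k j) (Nd k j) r) :
    HasDerivAt (fun s => (M s * N s) i j) ((Md * N r + M r * Nd) i j) r := by
  simp only [Matrix.mul_apply, Matrix.add_apply]
  have h := HasDerivAt.fun_sum (u := Finset.univ)
    (fun k (_ : k ∈ Finset.univ) => (hM k).mul (hN k))
  exact h.congr_deriv Finset.sum_add_distrib

private lemma diffAt_det {n : ℕ} {M : ℝ → Matrix (Fin n) (Fin n) ℝ} {r : ℝ}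
    (h : ∀ i j, DifferentiableAt ℝ (fun s => M s i j) r) :
    DifferentiableAt ℝ (fun s => (M s).det) r := by
  simp only [Matrix.det_apply']
  exact DifferentiableAt.fun_sum fun p _ =>
    ((DifferentiableAt.fun_finsetProd (fun i _ => h (p i) i))).const_mul _

private lemma diffAt_inv_entry {n : ℕ} {M : ℝ → Matrix (Fin n) (Fin n) ℝ} {r : ℝ}
    (h : ∀ i j, DifferentiableAt ℝ (fun s => M s i j) r)
    (hu : IsUnit (M r)) (i j : Fin n) :
    DifferentiableAt ℝ (fun s => (M s)⁻¹ i j) r := by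
  have hdet : (M r).det ≠ 0 :=
    IsUnit.ne_zero ((Matrix.isUnit_iff_isUnit_det _).mp hu)
  have hrw : (fun s => (M s)⁻¹ i j) = fun s => ((M s).det)⁻¹ * (M s).adjugate i j := by
    funext s
    rw [Matrix.inv_def, Ring.inverse_eq_inv']
    simp [Matrix.smul_apply, smul_eq_mul]
  rw [hrw]
  have hadj : DifferentiableAt ℝ (fun s => (M s).adjugate i j) r := by
    have heq : (fun s => (M s).adjugate i j)
        = fun s => ((M s).updateRow j (Pi.single i 1)).det := by
      funext s; rw [Matrix.adjugate_apply]
    rw [heq]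
    apply diffAt_det
    intro a b
    by_cases hab : a = j
    · simp only [Matrix.updateRow_apply, hab, if_true]
      exact differentiableAt_const _
    · simp only [Matrix.updateRow_apply, hab, if_false]
      exact h a b
  exact ((diffAt_det h).inv hdet).mul hadj

private lemma hasDerivAt_inv_entry {n : ℕ} {σ σd : ℝ → Matrix (Fin n) (Fin n) ℝ}
    (hσ : ∀ r i j, HasDerivAt (fun s => σ s i j) (σd r i j) r)
    (hσinv : ∀ r, IsUnit (σ r)) (r : ℝ) (i j : Fin n) :
    HasDerivAt (fun s => (σ s)⁻¹ i j) ((-((σ r)⁻¹ * σd r * (σ r)⁻¹)) i j) r := by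
  have hdet : ∀ s, IsUnit (σ s).det := fun s => (Matrix.isUnit_iff_isUnit_det _).mp (hσinv s)
  have hdiff : ∀ a b, DifferentiableAt ℝ (fun s => (σ s)⁻¹ a b) r :=
    diffAt_inv_entry (fun a b => (hσ r a b).differentiableAt) (hσinv r)
  set D : Matrix (Fin n) (Fin n) ℝ :=
    Matrix.of fun a b => deriv (fun s => (σ s)⁻¹ a b) r with hD_def
  have hD : ∀ a b, HasDerivAt (fun s => (σ s)⁻¹ a b) (D a b) r := fun a b =>
    (hdiff a b).hasDerivAt
  have hzero : σd r * (σ r)⁻¹ + σ r * D = 0 := by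
    ext a b
    have hprod : HasDerivAt (fun s => (σ s * (σ s)⁻¹) a b)
        ((σd r * (σ r)⁻¹ + σ r * D) a b) r :=
      hasDerivAt_mulEntry (fun k => hσ r a k) (fun k => hD k b)
    have hconst : (fun s => (σ s * (σ s)⁻¹) a b)
        = fun _ => (1 : Matrix (Fin n) (Fin n) ℝ) a b := by
      funext s; rw [Matrix.mul_nonsing_inv _ (hdet s)]
    rw [hconst] at hprod
    have := hprod.unique (hasDerivAt_const _ _)
    simpa using this
  have hDeq : D = -((σ r)⁻¹ * σd r * (σ r)⁻¹) := by
    have h1 : σ r * D = -(σd r * (σ r)⁻¹) := by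
      rw [eq_neg_iff_add_eq_zero, add_comm]; exact hzero
    calc D = (σ r)⁻¹ * (σ r * D) := by
            rw [← Matrix.mul_assoc, Matrix.nonsing_inv_mul _ (hdet r), Matrix.one_mul]
      _ = -((σ r)⁻¹ * σd r * (σ r)⁻¹) := by rw [h1, Matrix.mul_neg, Matrix.mul_assoc]
  rw [← hDeq]
  exact hD i j

/-- Paper's equation (13): if `σ'' = (A - ℰ)σ` with `σ(r)` invertible, `A(r)` symmetric
and the self-Wronskian `σᵀσ' - σ'ᵀσ` vanishes, then `φ̃ = (σᵀ)⁻¹` solves the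
transformed equation `φ̃'' = (A - 2U' - ℰ)φ̃`, where `U = σ'σ⁻¹`. -/
theorem inverse_transpose_solves_transformed_equation
    (n : ℕ) (hn : 0 < n)
    (A : ℝ → Matrix (Fin n) (Fin n) ℝ) (ℰ : ℝ)
    (hA : ∀ r, (A r).IsSymm)
    (σ σd σdd : ℝ → Matrix (Fin n) (Fin n) ℝ)
    (hσ : ∀ r i j, HasDerivAt (fun s => σ s i j) (σd r i j) r)
    (hσd : ∀ r i j, HasDerivAt (fun s => σd s i j) (σdd r i j) r)
    (hσinv : ∀ r, IsUnit (σ r))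
    (hσeq : ∀ r, σdd r = (A r - ℰ • (1 : Matrix (Fin n) (Fin n) ℝ)) * σ r)
    (hwronsk : ∀ r, (σ r)ᵀ * σd r = (σd r)ᵀ * σ r) :
    let U : ℝ → Matrix (Fin n) (Fin n) ℝ := fun r => σd r * (σ r)⁻¹
    let Ud : ℝ → Matrix (Fin n) (Fin n) ℝ := fun r =>
      Matrix.of fun i j => deriv (fun s => U s i j) r
    let φt : ℝ → Matrix (Fin n) (Fin n) ℝ := fun r => ((σ r)ᵀ)⁻¹
    ∀ (r : ℝ) (i j : Fin n),
      deriv (fun t => deriv (fun s => φt s i j) t) r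
        = ((A r - (2 : ℝ) • Ud r - ℰ • (1 : Matrix (Fin n) (Fin n) ℝ)) * φt r) i j := by
  intro U Ud φt r i j
  have hdet : ∀ s, IsUnit (σ s).det := fun s => (Matrix.isUnit_iff_isUnit_det _).mp (hσinv s)
  set invd : ℝ → Matrix (Fin n) (Fin n) ℝ :=
    fun t => -((σ t)⁻¹ * σd t * (σ t)⁻¹) with hinvd_def
  have hinv : ∀ t a b, HasDerivAt (fun s => (σ s)⁻¹ a b) (invd t a b) t := fun t a b =>
    hasDerivAt_inv_entry hσ hσinv t a b
  have hU : ∀ t a b, HasDerivAt (fun s => U s a b)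
      ((σdd t * (σ t)⁻¹ + σd t * invd t) a b) t := fun t a b =>
    hasDerivAt_mulEntry (fun k => hσd t a k) (fun k => hinv t k b)
  have hUd : Ud r = σdd r * (σ r)⁻¹ + σd r * invd r := by
    ext a b
    exact (hU r a b).deriv
  have hφ : ∀ t a b, HasDerivAt (fun s => φt s a b) (invd t b a) t := by
    intro t a b
    have heq : (fun s => φt s a b) = fun s => (σ s)⁻¹ b a := by
      funext s
      show ((σ s)ᵀ)⁻¹ a b = (σ s)⁻¹ b a
      rw [← Matrix.transpose_nonsing_inv, Matrix.transpose_apply]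
    rw [heq]
    exact hinv t b a
  have hd1 : (fun t => deriv (fun s => φt s i j) t) = fun t => invd t j i :=
    funext fun t => (hφ t i j).deriv
  rw [hd1]
  have hinner : ∀ k, HasDerivAt (fun t => ((σ t)⁻¹ * σd t) j k)
      ((invd r * σd r + (σ r)⁻¹ * σdd r) j k) r := fun k =>
    hasDerivAt_mulEntry (fun k' => hinv r j k') (fun k' => hσd r k' k)
  have htri : HasDerivAt (fun t => ((σ t)⁻¹ * σd t * (σ t)⁻¹) j i)
      (((invd r * σd r + (σ r)⁻¹ * σdd r) * (σ r)⁻¹ + ((σ r)⁻¹ * σd r) * invd r) j i) r :=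
    hasDerivAt_mulEntry hinner (fun k => hinv r k i)
  have hsec : HasDerivAt (fun t => invd t j i)
      ((-((invd r * σd r + (σ r)⁻¹ * σdd r) * (σ r)⁻¹ + ((σ r)⁻¹ * σd r) * invd r)) j i) r := by
    have heq : (fun t => invd t j i) = fun t => -(((σ t)⁻¹ * σd t * (σ t)⁻¹) j i) := by
      funext t; simp [hinvd_def]
    rw [heq]
    simpa [Matrix.neg_apply] using htri.fun_neg
  rw [hsec.deriv]
  set S := σ r with hS_def
  set D := σd r with hD_def
  set N := S⁻¹ with hN_def
  set E := A r - ℰ • (1 : Matrix (Fin n) (Fin n) ℝ) with hE_def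
  have hSN : S * N = 1 := Matrix.mul_nonsing_inv _ (hdet r)
  have hNTST : Nᵀ * Sᵀ = 1 := by rw [← Matrix.transpose_mul, hSN, Matrix.transpose_one]
  have hDN : Nᵀ * Dᵀ = D * N := by
    calc Nᵀ * Dᵀ = Nᵀ * (Dᵀ * (S * N)) := by rw [hSN, Matrix.mul_one]
      _ = Nᵀ * (Dᵀ * S * N) := by rw [Matrix.mul_assoc Dᵀ]
      _ = Nᵀ * (Sᵀ * D * N) := by rw [← hwronsk r]
      _ = Nᵀ * Sᵀ * (D * N) := by rw [Matrix.mul_assoc Sᵀ, ← Matrix.mul_assoc]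
      _ = D * N := by rw [hNTST, Matrix.one_mul]
  have hET : Eᵀ = E := by
    rw [hE_def, Matrix.transpose_sub, (hA r), Matrix.transpose_smul, Matrix.transpose_one]
  have hinvdr : invd r = -(N * D * N) := rfl
  have hσddr0 : σdd r = E * S := by rw [hE_def]; exact hσeq r
  have hUdr : Ud r = E - D * N * (D * N) := by
    rw [hUd, hσddr0, hinvdr]
    show E * S * N + D * -(N * D * N) = E - D * N * (D * N)
    have ha : D * (N * D * N) = D * N * (D * N) := by noncomm_ring
    rw [Matrix.mul_assoc E S N, hSN, Matrix.mul_one, Matrix.mul_neg, ha, sub_eq_add_neg]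
  have hφtr : φt r = Nᵀ := by
    show ((σ r)ᵀ)⁻¹ = Nᵀ
    rw [← Matrix.transpose_nonsing_inv]
  rw [hφtr]
  set X : Matrix (Fin n) (Fin n) ℝ :=
    -((invd r * D + N * σdd r) * N + (N * D) * invd r) with hX_def
  have hfinal : Xᵀ
      = (A r - (2 : ℝ) • Ud r - ℰ • (1 : Matrix (Fin n) (Fin n) ℝ)) * Nᵀ := by
    have hArw : A r - (2 : ℝ) • Ud r - ℰ • (1 : Matrix (Fin n) (Fin n) ℝ)
        = E - (2 : ℝ) • Ud r := by rw [hE_def, sub_right_comm]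
    rw [hArw, hUdr]
    have hσddr : σdd r = E * S := by rw [hE_def]; exact hσeq r
    have hXval : X = (2 : ℝ) • (N * D * N * (D * N)) - N * E := by
      rw [hX_def, hinvdr, hσddr]
      have h1 : N * (E * S) * N = N * E := by
        rw [Matrix.mul_assoc N (E * S) N, Matrix.mul_assoc E S N, hSN, Matrix.mul_one]
      rw [two_smul, ← h1]
      noncomm_ring
    have h4 : (N * D * N * (D * N))ᵀ = D * N * (D * N) * Nᵀ := by
      simp only [Matrix.transpose_mul]
      rw [← Matrix.mul_assoc Nᵀ Dᵀ Nᵀ, hDN, ← Matrix.mul_assoc]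
    have h5 : E - (2 : ℝ) • (E - D * N * (D * N))
        = (2 : ℝ) • (D * N * (D * N)) - E := by
      simp only [smul_sub, two_smul]
      abel
    rw [hXval, Matrix.transpose_sub, Matrix.transpose_smul, h4, Matrix.transpose_mul N E, hET,
      h5, Matrix.sub_mul, smul_mul_assoc, hE_def]
    simp [Matrix.sub_mul, smul_mul_assoc]
  calc X j i = Xᵀ i j := (Matrix.transpose_apply X i j).symm
    _ = _ := by rw [hfinal]
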